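/- arXiv:2408.11164 — 3 statements merged into one kernel-verified Lean document; each statement's English description precedes it below -/
import Mathlib

section
/- The efficiency of the Gaussian kernel relative to the Epanechnikov kernel, eff(𝓝) = (C(𝓔)/C(𝓝))^((n+4)/4), equals 2^(n+2)·(n+4)^(−n/2−1)·Γ(n/2+2), where C(𝓚) = β_𝓚·(n·β_𝓚/α_𝓚²)^(−n/(n+4)). -/
open Real

/-- Volume of the unit ball in `ℝⁿ`: `c_n = π^(n/2) / Γ(n/2 + 1)`. -/
noncomputable def unitBallVol (n : ℕ) : ℝ :=
  Real.pi ^ ((n : ℝ) / 2) / Real.Gamma ((n : ℝ) / 2 + 1)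

/-- Efficiency of the Gaussian kernel relative to the Epanechnikov kernel:
`eff(𝓝) = (C(𝓔)/C(𝓝))^((n+4)/4) = 2^(n+2) (n+4)^(-n/2-1) Γ(n/2+2)`,
where `C(𝓚) = β_𝓚 (n β_𝓚 / α_𝓚²)^(-n/(n+4))`, `α_𝓝 = α_𝓔 = 1`,
`β_𝓝 = (2√π)^(-n)`, `β_𝓔 = (2/c_n)(n+2)(n+4)^(-n/2-1)`. -/
theorem gaussian_kernel_efficiency (n : ℕ) (hn : 1 ≤ n) :
    let αN : ℝ := 1
    let αE : ℝ := 1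
    let βN : ℝ := (2 * Real.sqrt Real.pi) ^ (-(n : ℝ))
    let βE : ℝ := (2 / unitBallVol n) * ((n : ℝ) + 2) * ((n : ℝ) + 4) ^ (-(n : ℝ) / 2 - 1)
    let CN : ℝ := βN * ((n : ℝ) * βN / αN ^ 2) ^ (-(n : ℝ) / ((n : ℝ) + 4))
    let CE : ℝ := βE * ((n : ℝ) * βE / αE ^ 2) ^ (-(n : ℝ) / ((n : ℝ) + 4))
    (CE / CN) ^ (((n : ℝ) + 4) / 4)
      = 2 ^ ((n : ℝ) + 2) * ((n : ℝ) + 4) ^ (-(n : ℝ) / 2 - 1)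
        * Real.Gamma ((n : ℝ) / 2 + 2) := by
  intro αN αE βN βE CN CE
  have hπ : (0:ℝ) < Real.pi := Real.pi_pos
  have hnpos : (0:ℝ) < (n:ℝ) := by exact_mod_cast Nat.lt_of_lt_of_le Nat.zero_lt_one hn
  have hn4 : (0:ℝ) < (n:ℝ) + 4 := by linarith
  have hβN : 0 < βN := by
    show (0:ℝ) < (2 * Real.sqrt Real.pi) ^ (-(n : ℝ))
    positivity
  have hΓ : 0 < Real.Gamma ((n:ℝ)/2 + 1) := Real.Gamma_pos_of_pos (by positivity)
  have hc : 0 < unitBallVol n := by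
    unfold unitBallVol; positivity
  have hβE : 0 < βE := by
    show (0:ℝ) < (2 / unitBallVol n) * ((n : ℝ) + 2) * ((n : ℝ) + 4) ^ (-(n : ℝ) / 2 - 1)
    positivity
  set p : ℝ := -(n:ℝ)/((n:ℝ)+4) with hp
  have hCE : CE = βE * ((n:ℝ)*βE) ^ p := by
    show βE * ((n : ℝ) * βE / αE ^ 2) ^ p = _
    simp [αE]
  have hCN : CN = βN * ((n:ℝ)*βN) ^ p := by
    show βN * ((n : ℝ) * βN / αN ^ 2) ^ p = _
    simp [αN]
  have hratio : CE / CN = (βE/βN) ^ (1 + p) := by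
    rw [hCE, hCN, Real.rpow_add (by positivity) 1 p, Real.rpow_one,
      mul_div_mul_comm, ← Real.div_rpow (by positivity) (by positivity),
      mul_div_mul_left _ _ (ne_of_gt hnpos)]
  have hexp : (1 + p) * (((n:ℝ)+4)/4) = 1 := by
    rw [hp]; field_simp; ring
  have key : (CE/CN) ^ (((n:ℝ)+4)/4) = βE/βN := by
    rw [hratio, ← Real.rpow_mul (by positivity), hexp, Real.rpow_one]
  rw [key]
  have hβNinv : βN⁻¹ = (2:ℝ) ^ (n:ℝ) * Real.pi ^ ((n:ℝ)/2) := by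
    show ((2 * Real.sqrt Real.pi) ^ (-(n : ℝ)))⁻¹ = _
    rw [Real.rpow_neg (by positivity), inv_inv,
      Real.mul_rpow (by norm_num) (Real.sqrt_nonneg _),
      Real.sqrt_eq_rpow, ← Real.rpow_mul hπ.le]
    ring_nf
  have hΓ2 : Real.Gamma ((n:ℝ)/2 + 2) = ((n:ℝ)/2 + 1) * Real.Gamma ((n:ℝ)/2 + 1) := by
    rw [show (n:ℝ)/2 + 2 = ((n:ℝ)/2 + 1) + 1 by ring, Real.Gamma_add_one (by positivity)]
  have h2 : (2:ℝ) ^ ((n:ℝ) + 2) = 4 * (2:ℝ) ^ (n:ℝ) := by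
    rw [Real.rpow_add (by norm_num)]
    norm_num
    ring
  rw [div_eq_mul_inv, hβNinv, hΓ2, h2]
  show (2 / unitBallVol n) * ((n : ℝ) + 2) * ((n : ℝ) + 4) ^ (-(n : ℝ) / 2 - 1) * _ = _
  unfold unitBallVol
  have hpow : (0:ℝ) < Real.pi ^ ((n:ℝ)/2) := by positivity
  field_simp
  ring
end

section
/- The sequence eff(n) = 2^(n+2)·(n+4)^(−n/2−1)·Γ(n/2+2) tends to 0 as n → ∞. -/
open Real Filter

/-- Stirling-type upper bound for factorials. -/
lemma fact_le_stirling (m : ℕ) :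
    (Nat.factorial (m + 1) : ℝ) ≤ Real.exp 1 * Real.sqrt ((m : ℝ) + 1) *
      (((m : ℝ) + 1) / Real.exp 1) ^ (m + 1) := by
  have h := Stirling.stirlingSeq'_antitone (Nat.zero_le m)
  simp only [Function.comp_apply, Nat.succ_eq_add_one, Nat.zero_add] at h
  rw [Stirling.stirlingSeq_one] at h
  have hD : (0 : ℝ) < Real.sqrt (2 * ((m : ℕ) + 1 : ℕ)) *
      ((((m : ℕ) + 1 : ℕ) : ℝ) / Real.exp 1) ^ (m + 1) := by
    positivity
  rw [Stirling.stirlingSeq, div_le_iff₀ hD] at h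
  calc (Nat.factorial (m + 1) : ℝ) ≤ Real.exp 1 / Real.sqrt 2 *
        (Real.sqrt (2 * ((m : ℕ) + 1 : ℕ)) *
          ((((m : ℕ) + 1 : ℕ) : ℝ) / Real.exp 1) ^ (m + 1)) := h
    _ = Real.exp 1 * Real.sqrt ((m : ℝ) + 1) *
        (((m : ℝ) + 1) / Real.exp 1) ^ (m + 1) := by
        push_cast
        rw [Real.sqrt_mul (by norm_num : (0:ℝ) ≤ 2)]
        have h2 : Real.sqrt 2 ≠ 0 := by positivity
        field_simp

/-- The bounding sequence tends to zero. -/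
lemma bound_tendsto_zero :
    Tendsto (fun n : ℕ => ((n : ℝ) + 4) ^ 2 * Real.sqrt (2 / Real.exp 1) ^ n)
      atTop (nhds 0) := by
  set r : ℝ := Real.sqrt (2 / Real.exp 1) with hr
  have hr0 : 0 < r := by
    apply Real.sqrt_pos.mpr
    positivity
  have hr1 : r < 1 := by
    rw [hr, Real.sqrt_lt' one_pos, one_pow, div_lt_one (Real.exp_pos 1)]
    linarith [Real.exp_one_gt_d9]
  have h := (tendsto_pow_const_mul_const_pow_of_lt_one 2 hr0.le hr1).comp
    (tendsto_add_atTop_nat 4)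
  have h2 := h.mul_const (r⁻¹ ^ 4)
  rw [zero_mul] at h2
  refine h2.congr fun n => ?_
  simp only [Function.comp_apply]
  push_cast
  rw [pow_add]
  field_simp

/-- The Gaussian-kernel efficiency `eff(n) = 2^(n+2) (n+4)^(-n/2-1) Γ(n/2+2)` tends to 0
as `n → ∞`. -/
theorem gaussian_efficiency_tendsto_zero :
    Tendsto (fun n : ℕ =>
        (2 : ℝ) ^ ((n : ℝ) + 2) * ((n : ℝ) + 4) ^ (-(n : ℝ) / 2 - 1)
          * Real.Gamma ((n : ℝ) / 2 + 2))
      atTop (nhds 0) := by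
  have he : (0 : ℝ) < Real.exp 1 := Real.exp_pos 1
  have helt : (2 : ℝ) < Real.exp 1 := by linarith [Real.exp_one_gt_d9]
  refine squeeze_zero' ?_ ?_ bound_tendsto_zero
  · filter_upwards [eventually_ge_atTop 0] with n _
    have h1 : (0:ℝ) < (n : ℝ) / 2 + 2 := by positivity
    have h2 : (0:ℝ) < Real.Gamma ((n : ℝ) / 2 + 2) := Real.Gamma_pos_of_pos h1
    positivity
  · filter_upwards [eventually_ge_atTop 10] with n hn
    have hn' : (10 : ℝ) ≤ (n : ℝ) := by exact_mod_cast hn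
    set k : ℕ := (n + 1) / 2 with hk
    have hkn1 : n ≤ 2 * k := by omega
    have hkn2 : 2 * k ≤ n + 2 := by omega
    have hkn3 : 5 ≤ k := by omega
    have hc1 : (n : ℝ) ≤ 2 * (k : ℝ) := by exact_mod_cast hkn1
    have hc2 : 2 * (k : ℝ) ≤ (n : ℝ) + 2 := by exact_mod_cast hkn2
    have hc3 : (5 : ℝ) ≤ (k : ℝ) := by exact_mod_cast hkn3
    -- Step 1 : Gamma monotonicity
    have hG1 : Real.Gamma ((n : ℝ) / 2 + 2) ≤ Real.Gamma ((k : ℝ) + 2) := by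
      apply Real.Gamma_strictMonoOn_Ici.monotoneOn
      · simp only [Set.mem_Ici]; linarith
      · simp only [Set.mem_Ici]; linarith
      · linarith
    have hG2 : Real.Gamma ((k : ℝ) + 2) = (Nat.factorial (k + 1) : ℝ) := by
      have : ((k : ℝ) + 2) = ((k + 1 : ℕ) : ℝ) + 1 := by push_cast; ring
      rw [this, Real.Gamma_nat_eq_factorial]
    -- Step 2 : Stirling bound on factorial
    have hF : (Nat.factorial (k + 1) : ℝ) ≤ Real.exp 1 * Real.sqrt ((k : ℝ) + 1) *
        (((k : ℝ) + 1) / Real.exp 1) ^ (k + 1) := fact_le_stirling k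
    -- Step 3 : bound the power by an rpow with larger base and exponent
    have hbase1 : (1 : ℝ) ≤ ((k : ℝ) + 1) / Real.exp 1 := by
      rw [le_div_iff₀ he]
      nlinarith [Real.exp_one_lt_d9]
    have hbase2 : ((k : ℝ) + 1) / Real.exp 1 ≤ ((n : ℝ) + 4) / (2 * Real.exp 1) := by
      rw [div_le_div_iff₀ he (by positivity)]
      nlinarith
    have hexp : ((k + 1 : ℕ) : ℝ) ≤ ((n : ℝ) + 4) / 2 := by
      push_cast
      linarith
    have hP : (((k : ℝ) + 1) / Real.exp 1) ^ (k + 1) ≤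
        (((n : ℝ) + 4) / (2 * Real.exp 1)) ^ (((n : ℝ) + 4) / 2) := by
      rw [← Real.rpow_natCast (((k : ℝ) + 1) / Real.exp 1) (k + 1)]
      calc (((k : ℝ) + 1) / Real.exp 1) ^ ((k + 1 : ℕ) : ℝ)
          ≤ (((n : ℝ) + 4) / (2 * Real.exp 1)) ^ ((k + 1 : ℕ) : ℝ) :=
            Real.rpow_le_rpow (by positivity) hbase2 (by positivity)
        _ ≤ (((n : ℝ) + 4) / (2 * Real.exp 1)) ^ (((n : ℝ) + 4) / 2) :=
            Real.rpow_le_rpow_of_exponent_le (le_trans hbase1 hbase2) hexp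
    have hS : Real.sqrt ((k : ℝ) + 1) ≤ (n : ℝ) + 4 := by
      rw [show (n : ℝ) + 4 = Real.sqrt (((n : ℝ) + 4) ^ 2) by
        rw [Real.sqrt_sq (by linarith)]]
      apply Real.sqrt_le_sqrt
      nlinarith
    -- Combine
    have hGam : Real.Gamma ((n : ℝ) / 2 + 2) ≤
        Real.exp 1 * ((n : ℝ) + 4) *
          (((n : ℝ) + 4) / (2 * Real.exp 1)) ^ (((n : ℝ) + 4) / 2) := by
      calc Real.Gamma ((n : ℝ) / 2 + 2) ≤ (Nat.factorial (k + 1) : ℝ) := hG2 ▸ hG1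
        _ ≤ Real.exp 1 * Real.sqrt ((k : ℝ) + 1) *
            (((k : ℝ) + 1) / Real.exp 1) ^ (k + 1) := hF
        _ ≤ Real.exp 1 * ((n : ℝ) + 4) *
            (((n : ℝ) + 4) / (2 * Real.exp 1)) ^ (((n : ℝ) + 4) / 2) := by
          apply mul_le_mul
          · exact mul_le_mul_of_nonneg_left hS he.le
          · exact hP
          · positivity
          · positivity
    have hpre : (0 : ℝ) <
        (2 : ℝ) ^ ((n : ℝ) + 2) * ((n : ℝ) + 4) ^ (-(n : ℝ) / 2 - 1) := by
      positivity
    have ha : (0 : ℝ) < (n : ℝ) + 4 := by linarith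
    have h2 : (0 : ℝ) < (2 : ℝ) := by norm_num
    calc (2 : ℝ) ^ ((n : ℝ) + 2) * ((n : ℝ) + 4) ^ (-(n : ℝ) / 2 - 1)
          * Real.Gamma ((n : ℝ) / 2 + 2)
        ≤ (2 : ℝ) ^ ((n : ℝ) + 2) * ((n : ℝ) + 4) ^ (-(n : ℝ) / 2 - 1) *
          (Real.exp 1 * ((n : ℝ) + 4) *
            (((n : ℝ) + 4) / (2 * Real.exp 1)) ^ (((n : ℝ) + 4) / 2)) :=
          mul_le_mul_of_nonneg_left hGam hpre.le
      _ = (2 : ℝ) ^ ((n : ℝ) + 2) * ((n : ℝ) + 4) ^ (-(n : ℝ) / 2 - 1) *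
          (Real.exp 1 * Real.exp (Real.log ((n : ℝ) + 4)) *
            (((n : ℝ) + 4) / (2 * Real.exp 1)) ^ (((n : ℝ) + 4) / 2)) := by
          rw [Real.exp_log ha]
      _ = Real.exp (Real.log ((n : ℝ) + 4) * 2 +
            (Real.log 2 - 1) * ((n : ℝ) / 2) - 1) := by
          rw [Real.rpow_def_of_pos h2, Real.rpow_def_of_pos ha,
            Real.rpow_def_of_pos (by positivity : (0:ℝ) < ((n : ℝ) + 4) / (2 * Real.exp 1)),
            Real.log_div ha.ne' (by positivity), Real.log_mul (by norm_num) he.ne',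
            Real.log_exp]
          rw [← Real.exp_add, ← Real.exp_add, ← Real.exp_add, sub_eq_add_neg,
            ← Real.exp_add]
          congr 1
          ring
      _ = ((n : ℝ) + 4) ^ 2 * (2 / Real.exp 1) ^ ((n : ℝ) / 2) * (Real.exp 1)⁻¹ := by
          rw [sub_eq_add_neg, Real.exp_add, Real.exp_add]
          congr 1
          · congr 1
            · rw [Real.exp_mul, Real.exp_log ha, Real.rpow_two]
            · rw [Real.rpow_def_of_pos (by positivity : (0:ℝ) < 2 / Real.exp 1),
                Real.log_div (by norm_num) he.ne', Real.log_exp]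
          · rw [Real.exp_neg]
      _ ≤ ((n : ℝ) + 4) ^ 2 * Real.sqrt (2 / Real.exp 1) ^ n := by
          have hrw : (2 / Real.exp 1 : ℝ) ^ ((n : ℝ) / 2) =
              Real.sqrt (2 / Real.exp 1) ^ n := by
            rw [Real.sqrt_eq_rpow, ← Real.rpow_natCast ((2 / Real.exp 1) ^ ((1:ℝ)/2)) n,
              ← Real.rpow_mul (by positivity)]
            ring_nf
          rw [hrw]
          have h1 : (Real.exp 1)⁻¹ ≤ 1 := by
            rw [inv_le_one_iff₀]; right; linarith
          have hnn : (0:ℝ) ≤ ((n : ℝ) + 4) ^ 2 * Real.sqrt (2 / Real.exp 1) ^ n := by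
            positivity
          nlinarith
end

section
/- The sequence eff(n) = 2^(n+2)·(n+4)^(−n/2−1)·Γ(n/2+2) is strictly positive and bounded above by 1 for every n ≥ 1. -/
open Real

private lemma two_le_aux (y : ℝ) (hy : 5/2 ≤ y) : (2:ℝ) ≤ (1 + 1/y) ^ y := by
  have hy0 : (0:ℝ) < y := by linarith
  have hiy : (0:ℝ) < 1/y := by positivity
  have hb : (0:ℝ) < 1 + 1/y := by positivity
  rw [Real.rpow_def_of_pos hb]
  have h1 : 1 - (1 + 1/y)⁻¹ = 1/(y+1) := by
    field_simp
    ring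
  have h2 : (1:ℝ)/(y+1) ≤ Real.log (1 + 1/y) := by
    have := Real.one_sub_inv_le_log_of_pos hb
    linarith [h1 ▸ this]
  have h3 : (5:ℝ)/7 ≤ y * (1/(y+1)) := by
    rw [mul_one_div, div_le_div_iff₀ (by norm_num) (by linarith)]
    linarith
  have h4 : Real.log 2 ≤ Real.log (1 + 1/y) * y := by
    have hl2 : Real.log 2 < 0.6931471808 := Real.log_two_lt_d9
    nlinarith [Real.log_nonneg (by linarith : (1:ℝ) ≤ 1 + 1/y)]
  calc (2:ℝ) = Real.exp (Real.log 2) := (Real.exp_log (by norm_num)).symm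
    _ ≤ _ := Real.exp_le_exp.mpr h4

private noncomputable def Eff (n : ℕ) : ℝ :=
  (2 : ℝ) ^ ((n : ℝ) + 2) * ((n : ℝ) + 4) ^ (-(n : ℝ) / 2 - 1) * Real.Gamma ((n : ℝ) / 2 + 2)

private lemma eff_step (k : ℕ) (hk : 1 ≤ k) : Eff (k + 2) ≤ Eff k := by
  set a : ℝ := (k : ℝ) with ha
  have ha1 : (1:ℝ) ≤ a := by rw [ha]; exact_mod_cast hk
  unfold Eff
  push_cast
  have hG : Real.Gamma ((a + 2) / 2 + 2) = (a/2 + 2) * Real.Gamma (a/2 + 2) := by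
    have : (a + 2) / 2 + 2 = (a/2 + 2) + 1 := by ring
    rw [this, Real.Gamma_add_one (by positivity)]
  rw [hG]
  have hGp : 0 < Real.Gamma (a/2 + 2) := Real.Gamma_pos_of_pos (by linarith)
  have h2p : (0:ℝ) < (2:ℝ) ^ (a + 2) := Real.rpow_pos_of_pos (by norm_num) _
  have h24 : (2:ℝ) ^ (a + 2 + 2) = (2:ℝ) ^ (a + 2) * 4 := by
    rw [Real.rpow_add (by norm_num)]; norm_num
  rw [h24]
  -- reduce to the key inequality
  have key : 4 * (a/2 + 2) * (a + 2 + 4) ^ (-(a + 2) / 2 - 1) ≤ (a + 4) ^ (-a / 2 - 1) := by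
    have hp4 : (0:ℝ) < a + 4 := by linarith
    have hp6 : (0:ℝ) < a + 6 := by linarith
    have e1 : -(a + 2) / 2 - 1 = -(a/2 + 2) := by ring
    have e2 : -a / 2 - 1 = -(a/2 + 1) := by ring
    have e3 : a + 2 + 4 = a + 6 := by ring
    rw [e1, e2, e3, Real.rpow_neg hp6.le, Real.rpow_neg hp4.le]
    rw [mul_inv_le_iff₀ (Real.rpow_pos_of_pos hp6 _), ← Real.rpow_neg hp4.le]
    -- goal: 4*(a/2+2) ≤ (a+4)^(-(a/2+1)) * (a+6)^(a/2+2)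
    have hsplit : (a + 6) ^ (a/2 + 2) = ((a + 6)/(a + 4)) ^ (a/2 + 2) * (a + 4) ^ (a/2 + 2) := by
      rw [← Real.mul_rpow (by positivity) hp4.le]
      congr 1
      field_simp
    rw [hsplit]
    have hkey2 : (2:ℝ) ≤ ((a + 6)/(a + 4)) ^ (a/2 + 2) := by
      have := two_le_aux ((a + 4)/2) (by linarith)
      have hb : 1 + 1/((a + 4)/2) = (a + 6)/(a + 4) := by
        field_simp; ring
      have he : (a + 4)/2 = a/2 + 2 := by ring
      rwa [hb, he] at this
    have hpow : (a + 4) ^ (a/2 + 2) * (a + 4) ^ (-(a/2 + 1)) = a + 4 := by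
      rw [← Real.rpow_add hp4]
      have : a/2 + 2 + -(a/2 + 1) = 1 := by ring
      rw [this, Real.rpow_one]
    calc 4 * (a/2 + 2) = 2 * (a + 4) := by ring
      _ ≤ ((a + 6)/(a + 4)) ^ (a/2 + 2) * (a + 4) := by nlinarith
      _ = ((a + 6)/(a + 4)) ^ (a/2 + 2) * ((a + 4) ^ (a/2 + 2) * (a + 4) ^ (-(a/2 + 1))) := by
          rw [hpow]
      _ = (a + 4) ^ (-(a/2 + 1)) * (((a + 6)/(a + 4)) ^ (a/2 + 2) * (a + 4) ^ (a/2 + 2)) := by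
          ring
  calc (2:ℝ) ^ (a + 2) * 4 * (a + 2 + 4) ^ (-(a + 2) / 2 - 1) * ((a/2 + 2) * Real.Gamma (a/2 + 2))
      = (2:ℝ) ^ (a + 2) * (4 * (a/2 + 2) * (a + 2 + 4) ^ (-(a + 2) / 2 - 1)) * Real.Gamma (a/2 + 2) := by
        ring
    _ ≤ (2:ℝ) ^ (a + 2) * ((a + 4) ^ (-a / 2 - 1)) * Real.Gamma (a/2 + 2) := by
        apply mul_le_mul_of_nonneg_right _ hGp.le
        exact mul_le_mul_of_nonneg_left key h2p.le
    _ = _ := by ring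

private lemma eff_one : Eff 1 ≤ 1 := by
  unfold Eff
  have hG : Real.Gamma (((1:ℕ):ℝ)/2 + 2) = 3/4 * Real.sqrt π := by
    have e1 : (((1:ℕ):ℝ)/2 + 2) = (3/2 : ℝ) + 1 := by norm_num
    have e2 : (3/2 : ℝ) = 1/2 + 1 := by norm_num
    rw [e1, Real.Gamma_add_one (by norm_num), e2, Real.Gamma_add_one (by norm_num),
      Real.Gamma_one_half_eq]
    ring
  rw [hG]
  have e3 : ((1:ℕ):ℝ) + 2 = (3:ℝ) := by norm_num
  have e4 : (2:ℝ) ^ (3:ℝ) = 8 := by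
    rw [show (3:ℝ) = ((3:ℕ):ℝ) by norm_num, Real.rpow_natCast]; norm_num
  have e5 : -((1:ℕ):ℝ)/2 - 1 = -((3:ℝ)/2) := by norm_num
  rw [e3, e4, e5, Real.rpow_neg (by norm_num : (0:ℝ) ≤ ((1:ℕ):ℝ) + 4)]
  set c : ℝ := (((1:ℕ):ℝ) + 4) ^ ((3:ℝ)/2) with hc
  have hcpos : 0 < c := Real.rpow_pos_of_pos (by norm_num) _
  have hcsq : c^2 = 125 := by
    rw [hc, ← Real.rpow_natCast _ 2, ← Real.rpow_mul (by norm_num)]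
    norm_num
  have hspos : 0 < Real.sqrt π := Real.sqrt_pos.mpr Real.pi_pos
  have hssq : (Real.sqrt π)^2 = π := Real.sq_sqrt Real.pi_pos.le
  have hpi : π < 3.15 := Real.pi_lt_d2
  have hmain : 6 * Real.sqrt π ≤ c := by
    by_contra h
    push_neg at h
    nlinarith
  calc 8 * c⁻¹ * (3/4 * Real.sqrt π) = 6 * Real.sqrt π * c⁻¹ := by ring
    _ ≤ c * c⁻¹ := by
        apply mul_le_mul_of_nonneg_right hmain (by positivity)
    _ = 1 := mul_inv_cancel₀ hcpos.ne'

private lemma eff_two : Eff 2 ≤ 1 := by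
  unfold Eff
  have hG : Real.Gamma (((2:ℕ):ℝ)/2 + 2) = 2 := by
    have e1 : (((2:ℕ):ℝ)/2 + 2) = (2:ℝ) + 1 := by norm_num
    have e2 : (2:ℝ) = 1 + 1 := by norm_num
    rw [e1, Real.Gamma_add_one (by norm_num)]
    nth_rewrite 2 [e2]
    rw [Real.Gamma_add_one (by norm_num), Real.Gamma_one]
    norm_num
  have e4 : (2:ℝ) ^ (((2:ℕ):ℝ) + 2) = 16 := by
    rw [show (((2:ℕ):ℝ) + 2) = ((4:ℕ):ℝ) by norm_num, Real.rpow_natCast]; norm_num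
  have e5 : (((2:ℕ):ℝ) + 4) ^ (-((2:ℕ):ℝ)/2 - 1) = 1/36 := by
    rw [show (-((2:ℕ):ℝ)/2 - 1) = -((2:ℕ):ℝ) by norm_num,
      Real.rpow_neg (by norm_num : (0:ℝ) ≤ ((2:ℕ):ℝ) + 4), Real.rpow_natCast]
    norm_num
  rw [hG, e4, e5]
  norm_num

private lemma eff_le_one : ∀ n : ℕ, 1 ≤ n → Eff n ≤ 1 := by
  intro n
  induction n using Nat.strong_induction_on with
  | _ n ih =>
    intro hn
    match n, hn with
    | 1, _ => exact eff_one
    | 2, _ => exact eff_two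
    | (k+3), _ =>
      have h1 : Eff (k + 3) ≤ Eff (k + 1) := eff_step (k + 1) (by omega)
      exact h1.trans (ih (k + 1) (by omega) (by omega))

/-- The Gaussian-kernel efficiency `eff(n) = 2^(n+2) (n+4)^(-n/2-1) Γ(n/2+2)` is strictly
positive and at most 1 for every `n ≥ 1`. -/
theorem gaussian_efficiency_pos_le_one (n : ℕ) (hn : 1 ≤ n) :
    0 < (2 : ℝ) ^ ((n : ℝ) + 2) * ((n : ℝ) + 4) ^ (-(n : ℝ) / 2 - 1)
        * Real.Gamma ((n : ℝ) / 2 + 2) ∧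
      (2 : ℝ) ^ ((n : ℝ) + 2) * ((n : ℝ) + 4) ^ (-(n : ℝ) / 2 - 1)
        * Real.Gamma ((n : ℝ) / 2 + 2) ≤ 1 := by
  constructor
  · have h1 : (0:ℝ) < (2 : ℝ) ^ ((n : ℝ) + 2) := Real.rpow_pos_of_pos (by norm_num) _
    have h2 : (0:ℝ) < ((n : ℝ) + 4) ^ (-(n : ℝ) / 2 - 1) :=
      Real.rpow_pos_of_pos (by positivity) _
    have h3 : 0 < Real.Gamma ((n : ℝ) / 2 + 2) :=
      Real.Gamma_pos_of_pos (by positivity)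
    positivity
  · exact eff_le_one n hn
end
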